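/- With the setup of the random n×n puzzle with q colors, for each piece type J, P(X_J ≥ 2) ≤ C·(n⁴·q^{-8} + n²·q^{-7}) for an absolute constant C. -/

import Mathlib

open Finset

lemma pair_count {E : Type} [Fintype E] [DecidableEq E] {q : ℕ}
    (J : Finset (Fin 4 → Fin q)) (hJ4 : J.card ≤ 4)
    (a b : Fin 4 → E) :
    (Finset.univ.filter (fun c : E → Fin q =>
        (fun i => c (a i)) ∈ J ∧ (fun i => c (b i)) ∈ J)).card
      ≤ 16 * q ^ (Fintype.card E -
          ((Finset.image a Finset.univ) ∪ (Finset.image b Finset.univ)).card) := by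
  set U : Finset E := (Finset.image a Finset.univ) ∪ (Finset.image b Finset.univ) with hU
  set f : (E → Fin q) → (Fin 4 → Fin q) × (Fin 4 → Fin q) × ((Uᶜ : Finset E) → Fin q) :=
    fun c => (fun i => c (a i), fun i => c (b i), fun e => c e.1) with hf
  have hinj : Function.Injective f := by
    intro c₁ c₂ h
    funext e
    by_cases he : e ∈ U
    · rcases Finset.mem_union.1 he with h1 | h1
      · obtain ⟨i, -, rfl⟩ := Finset.mem_image.1 h1
        exact congrFun (congrArg Prod.fst h) i
      · obtain ⟨i, -, rfl⟩ := Finset.mem_image.1 h1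
        exact congrFun (congrArg (Prod.fst ∘ Prod.snd) h) i
    · exact congrFun (congrArg (Prod.snd ∘ Prod.snd) h) ⟨e, Finset.mem_compl.2 he⟩
  have hle := Finset.card_le_card_of_injOn
    (s := Finset.univ.filter (fun c : E → Fin q =>
        (fun i => c (a i)) ∈ J ∧ (fun i => c (b i)) ∈ J))
    (t := J ×ˢ J ×ˢ (Finset.univ : Finset (((Uᶜ : Finset E) → Fin q)))) f
    (fun c hc => by
      obtain ⟨-, h1, h2⟩ := Finset.mem_filter.1 hc
      exact Finset.mem_product.2 ⟨h1, Finset.mem_product.2 ⟨h2, Finset.mem_univ _⟩⟩)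
    (hinj.injOn)
  refine hle.trans ?_
  rw [Finset.card_product, Finset.card_product, Finset.card_univ]
  have : Fintype.card (((Uᶜ : Finset E) → Fin q)) = q ^ (Fintype.card E - U.card) := by
    rw [Fintype.card_fun, Fintype.card_coe, Finset.card_compl, Fintype.card_fin]
  rw [this]
  calc J.card * (J.card * q ^ (Fintype.card E - U.card))
      ≤ 4 * (4 * q ^ (Fintype.card E - U.card)) := by
        exact Nat.mul_le_mul hJ4 (Nat.mul_le_mul_right _ hJ4)
    _ = 16 * q ^ (Fintype.card E - U.card) := by ring


lemma aux_arith (u i : ℕ) (h : u + i = 4 + 4) (hi : i ≤ 1) : 7 ≤ u := by omega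

lemma double_count {α β : Type} [Fintype α] [Fintype β] [DecidableEq β]
    (T : β → α → Prop) [∀ b a, Decidable (T b a)] :
    (Finset.univ.filter (fun a : α => 2 ≤ (Finset.univ.filter (fun b => T b a)).card)).card
      ≤ ∑ p ∈ (Finset.univ.filter (fun p : β × β => p.1 ≠ p.2)),
          (Finset.univ.filter (fun a => T p.1 a ∧ T p.2 a)).card := by
  set P := Finset.univ.filter (fun p : β × β => p.1 ≠ p.2) with hP
  calc (Finset.univ.filter (fun a : α => 2 ≤ (Finset.univ.filter (fun b => T b a)).card)).card
      = ∑ a ∈ Finset.univ.filter (fun a : α =>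
          2 ≤ (Finset.univ.filter (fun b => T b a)).card), 1 := by simp
    _ ≤ ∑ a ∈ Finset.univ.filter (fun a : α =>
          2 ≤ (Finset.univ.filter (fun b => T b a)).card),
          (P.filter (fun p => T p.1 a ∧ T p.2 a)).card := by
        refine Finset.sum_le_sum fun a ha => ?_
        obtain ⟨-, hc2⟩ := Finset.mem_filter.1 ha
        obtain ⟨s, hs, t, ht, hst⟩ := Finset.one_lt_card.1 hc2
        refine Finset.card_pos.2 ⟨(s, t), ?_⟩
        exact Finset.mem_filter.2 ⟨Finset.mem_filter.2 ⟨Finset.mem_univ _, hst⟩,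
          (Finset.mem_filter.1 hs).2, (Finset.mem_filter.1 ht).2⟩
    _ ≤ ∑ a ∈ Finset.univ, (P.filter (fun p => T p.1 a ∧ T p.2 a)).card :=
        Finset.sum_le_sum_of_subset (Finset.filter_subset _ _)
    _ = ∑ p ∈ P, (Finset.univ.filter (fun a => T p.1 a ∧ T p.2 a)).card := by
        simp_rw [Finset.card_filter]
        rw [Finset.sum_comm]

set_option maxHeartbeats 1000000 in
/-- For the random `n×n` puzzle with `q` colors, for each piece type `J` (a
rotation class of `4`-tuples of colors, of size at most `4`),
`P(X_J ≥ 2) ≤ C·(n⁴·q⁻⁸ + n²·q⁻⁷)` for an absolute constant `C`. Here distinct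
squares share at most one edge, and each square shares edges with at most four
other squares. -/
theorem prob_duplicate_piece_bound :
    ∃ C : ℝ, 0 < C ∧
      ∀ (n q : ℕ), 1 ≤ q →
      ∀ {E : Type} [Fintype E] [DecidableEq E]
        (ed : Fin n × Fin n → Fin 4 → E),
        (∀ s, Function.Injective (ed s)) →
        (∀ s t : Fin n × Fin n, s ≠ t →
          ((Finset.image (ed s) Finset.univ) ∩
            (Finset.image (ed t) Finset.univ)).card ≤ 1) →
        (∀ s : Fin n × Fin n,
          (Finset.univ.filter (fun t : Fin n × Fin n => t ≠ s ∧
            ¬ Disjoint (Finset.image (ed s) Finset.univ)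
                (Finset.image (ed t) Finset.univ))).card ≤ 4) →
        ∀ J : Finset (Fin 4 → Fin q),
          (∀ c ∈ J, (fun i => c (i + 1)) ∈ J) → J.card ≤ 4 →
          (Nat.card {c : E → Fin q //
              2 ≤ (Finset.univ.filter
                (fun s : Fin n × Fin n => (fun i => c (ed s i)) ∈ J)).card} : ℝ)
            / (q : ℝ) ^ (Fintype.card E)
          ≤ C * ((n : ℝ) ^ 4 * ((q : ℝ) ^ 8)⁻¹ + (n : ℝ) ^ 2 * ((q : ℝ) ^ 7)⁻¹) := by
  refine ⟨64, by norm_num, ?_⟩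
  intro n q hq E _ _ ed hinj hshare hdeg J hrot hJ4
  have hq0 : (0:ℝ) < (q:ℝ) := by exact_mod_cast hq
  set cE := Fintype.card E with hcE
  -- the bad set as a filter
  set S : Finset (E → Fin q) := Finset.univ.filter (fun c : E → Fin q =>
      2 ≤ (Finset.univ.filter
        (fun s : Fin n × Fin n => (fun i => c (ed s i)) ∈ J)).card) with hS
  have hNat : (Nat.card {c : E → Fin q //
      2 ≤ (Finset.univ.filter
        (fun s : Fin n × Fin n => (fun i => c (ed s i)) ∈ J)).card}) = S.card := by
    rw [Nat.card_eq_fintype_card, Fintype.card_subtype, hS]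
  -- pairs
  set A : Fin n × Fin n → Finset E := fun s => Finset.image (ed s) Finset.univ with hA
  set P : Finset ((Fin n × Fin n) × (Fin n × Fin n)) :=
    Finset.univ.filter (fun p => p.1 ≠ p.2) with hP
  set N : ((Fin n × Fin n) × (Fin n × Fin n)) → ℕ := fun p =>
    (Finset.univ.filter (fun c : E → Fin q =>
      (fun i => c (ed p.1 i)) ∈ J ∧ (fun i => c (ed p.2 i)) ∈ J)).card with hN
  set P1 := P.filter (fun p => Disjoint (A p.1) (A p.2)) with hP1
  set P2 := P.filter (fun p => ¬ Disjoint (A p.1) (A p.2)) with hP2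
  clear_value cE S A P N P1 P2
  -- Step 1: S.card ≤ ∑ p in P, N p
  have step1 : S.card ≤ ∑ p ∈ P, N p := by
    simp only [hS, hP, hN]
    exact double_count (fun s (c : E → Fin q) => (fun i => c (ed s i)) ∈ J)
  -- per pair bounds
  have pairbound : ∀ p : (Fin n × Fin n) × (Fin n × Fin n),
      N p ≤ 16 * q ^ (cE - (A p.1 ∪ A p.2).card) := by
    intro p
    simp only [hN, hA, hcE]
    exact pair_count J hJ4 (ed p.1) (ed p.2)
  have hUsub : ∀ p : (Fin n × Fin n) × (Fin n × Fin n), (A p.1 ∪ A p.2).card ≤ cE := by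
    intro p
    simpa [hcE] using Finset.card_le_univ (A p.1 ∪ A p.2)
  have hsplit : ∑ p ∈ P, N p = ∑ p ∈ P1, N p + ∑ p ∈ P2, N p := by
    rw [hP1, hP2]
    exact (Finset.sum_filter_add_sum_filter_not P _ N).symm
  have hAcard : ∀ s, (A s).card = 4 := by
    intro s
    simp only [hA]
    rw [Finset.card_image_of_injective _ (hinj s), Finset.card_univ, Fintype.card_fin]
  -- disjoint pairs: real bound
  have hb1 : ∀ p ∈ P1, (N p : ℝ) ≤ 16 * (q:ℝ) ^ cE * ((q:ℝ) ^ 8)⁻¹ := by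
    intro p hp
    rw [hP1] at hp
    obtain ⟨-, hdisj⟩ := Finset.mem_filter.1 hp
    have hU8 : (A p.1 ∪ A p.2).card = 8 := by
      rw [Finset.card_union_of_disjoint hdisj, hAcard, hAcard]
    have h8 : 8 ≤ cE := hU8 ▸ hUsub p
    have := pairbound p
    rw [hU8] at this
    have hcast : ((16 * q ^ (cE - 8) : ℕ) : ℝ) = 16 * (q:ℝ) ^ cE * ((q:ℝ) ^ 8)⁻¹ := by
      push_cast
      rw [pow_sub₀ (q:ℝ) (ne_of_gt hq0) h8]
      ring
    calc (N p : ℝ) ≤ ((16 * q ^ (cE - 8) : ℕ) : ℝ) := by exact_mod_cast this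
      _ = _ := hcast
  -- sharing pairs
  have hb2 : ∀ p ∈ P2, (N p : ℝ) ≤ 16 * (q:ℝ) ^ cE * ((q:ℝ) ^ 7)⁻¹ := by
    intro p hp
    rw [hP2] at hp
    obtain ⟨hpP, hndisj⟩ := Finset.mem_filter.1 hp
    rw [hP] at hpP
    have hpne : p.1 ≠ p.2 := (Finset.mem_filter.1 hpP).2
    have hint : (A p.1 ∩ A p.2).card ≤ 1 := by
      simp only [hA]; exact hshare p.1 p.2 hpne
    have hU7 : 7 ≤ (A p.1 ∪ A p.2).card := by
      have h := Finset.card_union_add_card_inter (A p.1) (A p.2)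
      rw [hAcard, hAcard] at h
      exact aux_arith _ _ h hint
    have h7 : 7 ≤ cE := le_trans hU7 (hUsub p)
    have key : N p ≤ 16 * q ^ (cE - 7) := by
      refine (pairbound p).trans ?_
      exact Nat.mul_le_mul_left _ (Nat.pow_le_pow_right hq (Nat.sub_le_sub_left hU7 cE))
    have hcast : ((16 * q ^ (cE - 7) : ℕ) : ℝ) = 16 * (q:ℝ) ^ cE * ((q:ℝ) ^ 7)⁻¹ := by
      push_cast
      rw [pow_sub₀ (q:ℝ) (ne_of_gt hq0) h7]
      ring
    calc (N p : ℝ) ≤ ((16 * q ^ (cE - 7) : ℕ) : ℝ) := by exact_mod_cast key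
      _ = _ := hcast
  -- cardinalities of P1, P2
  have hP1card : (P1.card : ℝ) ≤ (n:ℝ)^4 := by
    have : P1.card ≤ n^4 := by
      calc P1.card ≤ Fintype.card ((Fin n × Fin n) × (Fin n × Fin n)) :=
        Finset.card_le_univ _ |>.trans_eq (Finset.card_univ)
      _ = n^4 := by simp [Fintype.card_prod]; ring
    exact_mod_cast this
  have hP2card : (P2.card : ℝ) ≤ (n:ℝ)^2 * 4 := by
    have : P2.card ≤ n^2 * 4 := by
      have := Finset.card_eq_sum_card_fiberwise
        (s := P2) (t := (Finset.univ : Finset (Fin n × Fin n))) (f := Prod.fst)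
        (fun p _ => Finset.mem_univ _)
      rw [this]
      calc ∑ s ∈ Finset.univ, (P2.filter (fun p => p.1 = s)).card
          ≤ ∑ s ∈ (Finset.univ : Finset (Fin n × Fin n)), 4 := by
            refine Finset.sum_le_sum fun s _ => ?_
            refine le_trans ?_ (hdeg s)
            refine Finset.card_le_card_of_injOn (fun p => p.2) ?_ ?_
            · intro p hp
              obtain ⟨hp2, hp1⟩ := Finset.mem_filter.1 hp
              rw [hP2] at hp2
              obtain ⟨hpP, hndisj⟩ := Finset.mem_filter.1 hp2
              rw [hP] at hpP
              have hpne : p.1 ≠ p.2 := (Finset.mem_filter.1 hpP).2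
              subst hp1
              simp only [hA] at hndisj
              exact Finset.mem_filter.2 ⟨Finset.mem_univ _, fun h => hpne h.symm, hndisj⟩
            · intro p hp p' hp' hpp
              have h1 : p.1 = s := (Finset.mem_filter.1 hp).2
              have h1' : p'.1 = s := (Finset.mem_filter.1 hp').2
              exact Prod.ext (h1.trans h1'.symm) hpp
        _ = n^2 * 4 := by simp [Finset.card_univ, Fintype.card_prod]; ring
    exact_mod_cast this
  -- assemble
  have main : (S.card : ℝ) ≤
      (n:ℝ)^4 * (16 * (q:ℝ)^cE * ((q:ℝ)^8)⁻¹) + (n:ℝ)^2 * 4 * (16 * (q:ℝ)^cE * ((q:ℝ)^7)⁻¹) := by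
    have t1 : (∑ p ∈ P1, (N p : ℝ)) ≤ P1.card * (16 * (q:ℝ)^cE * ((q:ℝ)^8)⁻¹) := by
      simpa using Finset.sum_le_card_nsmul P1 _ _ hb1
    have t2 : (∑ p ∈ P2, (N p : ℝ)) ≤ P2.card * (16 * (q:ℝ)^cE * ((q:ℝ)^7)⁻¹) := by
      simpa using Finset.sum_le_card_nsmul P2 _ _ hb2
    have hs : (S.card : ℝ) ≤ (∑ p ∈ P1, (N p : ℝ)) + (∑ p ∈ P2, (N p : ℝ)) := by
      have := step1
      rw [hsplit] at this
      exact_mod_cast this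
    have hnn8 : (0:ℝ) ≤ 16 * (q:ℝ)^cE * ((q:ℝ)^8)⁻¹ := by positivity
    have hnn7 : (0:ℝ) ≤ 16 * (q:ℝ)^cE * ((q:ℝ)^7)⁻¹ := by positivity
    calc (S.card : ℝ) ≤ _ + _ := hs
      _ ≤ P1.card * (16 * (q:ℝ)^cE * ((q:ℝ)^8)⁻¹) + P2.card * (16 * (q:ℝ)^cE * ((q:ℝ)^7)⁻¹) :=
          add_le_add t1 t2
      _ ≤ (n:ℝ)^4 * (16 * (q:ℝ)^cE * ((q:ℝ)^8)⁻¹) + (n:ℝ)^2 * 4 * (16 * (q:ℝ)^cE * ((q:ℝ)^7)⁻¹) :=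
          add_le_add (mul_le_mul_of_nonneg_right hP1card hnn8)
            (mul_le_mul_of_nonneg_right hP2card hnn7)
  rw [hNat]
  rw [div_le_iff₀ (by positivity)]
  have h8 : (0:ℝ) < ((q:ℝ)^8)⁻¹ := by positivity
  have h7 : (0:ℝ) < ((q:ℝ)^7)⁻¹ := by positivity
  have hcEpos : (0:ℝ) < (q:ℝ)^cE := by positivity
  nlinarith [main, mul_nonneg (mul_nonneg (pow_nonneg (Nat.cast_nonneg n) 4) h8.le) hcEpos.le,
    mul_nonneg (mul_nonneg (pow_nonneg (Nat.cast_nonneg n) 2) h7.le) hcEpos.le]
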